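/- Suppose a, b, c, d, k are positive integers with gcd(c,d)=1 and 5c² = k(a² + b²) and 5d² = k(b² − 4a²). Then k = 5. -/

import Mathlib

/-! Auxiliary lemmas for the descent argument. -/

private lemma zmod8_lemma1 : ∀ a b c e : ZMod 8,
    c^2 = a^2 + (2*e+1)^2 → b^2 = 4*c^2 + (2*e+1)^2 → False := by decide

private lemma zmod8_lemma2 : ∀ x y z e : ZMod 8,
    x^2 = 4*y^2 + (2*e+1)^2 → y^2 = z^2 + (2*e+1)^2 → False := by decide

private lemma odd_coprime_two (a : ℤ) (h : Odd a) : IsCoprime a (2:ℤ) := by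
  obtain ⟨k, hk⟩ := h
  exact ⟨1, -k, by rw [hk]; ring⟩

private lemma cop_of_dvd {p q x y : ℤ} (h : IsCoprime p q) (hx : x ∣ p) (hy : y ∣ q) :
    IsCoprime x y :=
  (h.of_isCoprime_of_dvd_left hx).of_isCoprime_of_dvd_right hy

private lemma bound1 (p q c : ℤ) (hq0 : 0 < q) (hqp : q < p) (h : c = p^2 - q^2) : p < c := by
  nlinarith [mul_nonneg (by linarith : (0:ℤ) ≤ p - q - 1) (by linarith : (0:ℤ) ≤ p + q)]

private lemma bound2 (s t c : ℤ) (hs : 0 < s) (ht : 0 < t) (h : c = s^2 + t^2) : s < c := by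
  nlinarith

private lemma pyth_extract (x y z : ℤ) (hx : 0 < x) (hy : 0 < y) (hz : 0 < z)
    (hxodd : x % 2 = 1) (hco : Int.gcd x y = 1) (h : x^2 + y^2 = z^2) :
    ∃ p q : ℤ, 0 < q ∧ q < p ∧ x = p^2 - q^2 ∧ y = 2*p*q ∧ z = p^2 + q^2 ∧ Int.gcd p q = 1 := by
  have ht : PythagoreanTriple x y z := by
    show x*x + y*y = z*z
    nlinarith [h]
  obtain ⟨m, n, h1, h2, h3, h4, _, h6⟩ := ht.coprime_classification' hco hxodd hz
  have hmpos : 0 < m := by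
    rcases lt_or_eq_of_le h6 with h' | h'
    · exact h'
    · exfalso; rw [← h'] at h2; simp at h2; omega
  have hnpos : 0 < n := by nlinarith [h2, hy, hmpos]
  exact ⟨m, n, hnpos, by nlinarith [h1, hx], h1, h2, h3, h4⟩

private lemma nat_four (s t p q : ℕ) (h : s*t = p*q) (hpq : Nat.Coprime p q)
    (hst : Nat.Coprime s t) :
    ∃ a b c d : ℕ, s = a*b ∧ t = c*d ∧ p = a*c ∧ q = b*d := by
  have h1 : s ∣ p * q := ⟨t, h.symm⟩
  have h2 : t ∣ p * q := ⟨s, by rw [← h]; ring⟩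
  have h3 : p ∣ s * t := ⟨q, h⟩
  have h4 : q ∣ s * t := ⟨p, by rw [h]; ring⟩
  refine ⟨Nat.gcd s p, Nat.gcd s q, Nat.gcd t p, Nat.gcd t q, ?_, ?_, ?_, ?_⟩
  · calc s = Nat.gcd s (p*q) := (Nat.gcd_eq_left h1).symm
    _ = _ := Nat.Coprime.gcd_mul s hpq
  · calc t = Nat.gcd t (p*q) := (Nat.gcd_eq_left h2).symm
    _ = _ := Nat.Coprime.gcd_mul t hpq
  · calc p = Nat.gcd p (s*t) := (Nat.gcd_eq_left h3).symm
    _ = Nat.gcd p s * Nat.gcd p t := Nat.Coprime.gcd_mul p hst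
    _ = _ := by rw [Nat.gcd_comm p s, Nat.gcd_comm p t]
  · calc q = Nat.gcd q (s*t) := (Nat.gcd_eq_left h4).symm
    _ = Nat.gcd q s * Nat.gcd q t := Nat.Coprime.gcd_mul q hst
    _ = _ := by rw [Nat.gcd_comm q s, Nat.gcd_comm q t]

private lemma int_four (s t p q : ℤ) (hs : 0 < s) (ht : 0 < t) (hp : 0 < p) (hq : 0 < q)
    (h : s*t = p*q) (hpq : Int.gcd p q = 1) (hst : Int.gcd s t = 1) :
    ∃ a b c d : ℤ, 0 < a ∧ 0 < b ∧ 0 < c ∧ 0 < d ∧ s = a*b ∧ t = c*d ∧ p = a*c ∧ q = b*d := by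
  obtain ⟨A, B, C, D, e1, e2, e3, e4⟩ := nat_four s.natAbs t.natAbs p.natAbs q.natAbs
    (by rw [← Int.natAbs_mul, ← Int.natAbs_mul, h]) hpq hst
  have hs' : s = (s.natAbs : ℤ) := (Int.natAbs_of_nonneg hs.le).symm
  have ht' : t = (t.natAbs : ℤ) := (Int.natAbs_of_nonneg ht.le).symm
  have hp' : p = (p.natAbs : ℤ) := (Int.natAbs_of_nonneg hp.le).symm
  have hq' : q = (q.natAbs : ℤ) := (Int.natAbs_of_nonneg hq.le).symm
  refine ⟨A, B, C, D, ?_, ?_, ?_, ?_, ?_, ?_, ?_, ?_⟩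
  · by_contra hA
    have : A = 0 := by omega
    subst this; simp at e1; rw [hs', e1] at hs; simp at hs
  · by_contra hB
    have : B = 0 := by omega
    subst this; simp at e1; rw [hs', e1] at hs; simp at hs
  · by_contra hC
    have : C = 0 := by omega
    subst this; simp at e2; rw [ht', e2] at ht; simp at ht
  · by_contra hD
    have : D = 0 := by omega
    subst this; simp at e2; rw [ht', e2] at ht; simp at ht
  · rw [hs', e1]; push_cast; ring
  · rw [ht', e2]; push_cast; ring
  · rw [hp', e3]; push_cast; ring
  · rw [hq', e4]; push_cast; ring

/-- Reduction: a positive solution of `5c² = a² + b²`, `5d² = b² - 4a²` with `gcd c d = 1`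
yields a solution of the auxiliary system `c² = a² + 4D²`, `B² = c² + D²`. -/
private lemma P1_to_P2 (a b c d : ℤ) (ha : 0 < a) (hb : 0 < b) (hc : 0 < c) (hd : 0 < d)
    (hcd : Int.gcd c d = 1) (h1 : 5*c^2 = a^2 + b^2) (h2 : 5*d^2 = b^2 - 4*a^2) :
    ∃ D B : ℤ, 0 < D ∧ 0 < B ∧ Odd c ∧ Int.gcd c D = 1 ∧ c^2 = a^2 + 4*D^2 ∧ B^2 = c^2 + D^2 := by
  have e1 : c^2 = a^2 + d^2 := by linarith
  have e2 : b^2 = 4*c^2 + d^2 := by linarith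
  have hdeven : Even d := by
    rcases Int.even_or_odd d with h | h
    · exact h
    · exfalso
      obtain ⟨e, he⟩ := h
      have c1 : ((c:ZMod 8))^2 = (a:ZMod 8)^2 + (2*(e:ZMod 8)+1)^2 := by
        have := congrArg (fun z : ℤ => (z : ZMod 8)) e1
        push_cast [he] at this ⊢
        linear_combination this
      have c2 : ((b:ZMod 8))^2 = 4*(c:ZMod 8)^2 + (2*(e:ZMod 8)+1)^2 := by
        have := congrArg (fun z : ℤ => (z : ZMod 8)) e2
        push_cast [he] at this ⊢
        linear_combination this
      exact zmod8_lemma1 _ _ _ _ c1 c2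
  obtain ⟨D, hD⟩ := hdeven
  have hDd : d = 2*D := by omega
  have hDpos : 0 < D := by omega
  have hbeven : Even b := by
    rcases Int.even_or_odd b with h | h
    · exact h
    · exfalso
      obtain ⟨e, he⟩ := h
      have key : (2*e+1)^2 = 4*c^2 + (2*D)^2 := by rw [← he, ← hDd]; exact e2
      have h5 : (4:ℤ) ∣ 1 := ⟨c^2 + D^2 - (e^2+e), by nlinarith [key]⟩
      norm_num at h5
  obtain ⟨B, hB⟩ := hbeven
  have hBb : b = 2*B := by omega
  have hBpos : 0 < B := by omega
  have hcodd : Odd c := by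
    rcases Int.even_or_odd c with h | h
    · exfalso
      obtain ⟨f, hf⟩ := h
      have h2c : (2:ℤ) ∣ c := ⟨f, by omega⟩
      have h2d : (2:ℤ) ∣ d := ⟨D, hDd⟩
      have := Int.dvd_gcd h2c h2d
      rw [hcd] at this
      norm_num at this
    · exact h
  refine ⟨D, B, hDpos, hBpos, hcodd, ?_, by rw [hDd] at e1; linarith [e1],
    by nlinarith [e2, hBb, hDd]⟩
  have hdvd : (Int.gcd c D : ℤ) ∣ 1 := by
    rw [← Int.ofNat_one, ← hcd]
    exact Int.dvd_coe_gcd (Int.gcd_dvd_left _ _) ((Int.gcd_dvd_right _ _).trans ⟨2, by rw [hDd]; ring⟩)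
  have := Int.eq_one_of_dvd_one (by positivity) hdvd
  exact_mod_cast this

/-- The auxiliary system has no positive solutions : infinite descent. -/
private lemma noP2 : ∀ n : ℕ, ∀ a D c B : ℤ, 0 < a → 0 < D → 0 < c → 0 < B → Odd c →
    Int.gcd c D = 1 → c^2 = a^2 + 4*D^2 → B^2 = c^2 + D^2 → c.natAbs = n → False := by
  intro n
  induction n using Nat.strong_induction_on with
  | _ n IH =>
  intro a D c B ha hD hc hB hcodd hgcd e1 e2 hn
  have hcD : IsCoprime c D := Int.isCoprime_iff_gcd_eq_one.mpr hgcd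
  -- first triple : c² + D² = B²
  obtain ⟨p, q, hq0, hqp, hc_pq, hD_pq, hB_pq, hgcdpq⟩ :=
    pyth_extract c D B hc hD hB (Int.odd_iff.mp hcodd) hgcd (by linarith)
  have hpq : IsCoprime p q := Int.isCoprime_iff_gcd_eq_one.mpr hgcdpq
  -- a is odd
  have haodd : Odd a := by
    rcases Int.even_or_odd a with h | h
    · exfalso
      obtain ⟨α, hα⟩ := h
      have hα2 : a = 2*α := by omega
      obtain ⟨f, hf⟩ := hcodd
      rw [hα2, hf] at e1
      have h41 : (4:ℤ) ∣ 1 := ⟨α^2 + D^2 - f^2 - f, by linear_combination e1⟩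
      norm_num at h41
    · exact h
  -- coprimality of a and 2D
  have haD : IsCoprime a (2*D) := by
    have h1 : IsCoprime (a^2) D := by
      have : IsCoprime (c^2 + D*(-4*D)) D := (hcD.pow_left).add_mul_left_left _
      have heq : c^2 + D*(-4*D) = a^2 := by linarith
      rwa [heq] at this
    have h2 : IsCoprime a D := h1.of_isCoprime_of_dvd_left (dvd_pow_self a two_ne_zero)
    exact (odd_coprime_two a haodd).mul_right h2
  -- second triple : a² + (2D)² = c²
  obtain ⟨s, t, ht0, hts, ha_st, hD_st, hc_st, hgcdst⟩ :=
    pyth_extract a (2*D) c ha (by linarith) hc (Int.odd_iff.mp haodd)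
      (Int.isCoprime_iff_gcd_eq_one.mp haD) (by linear_combination -e1)
  have hst : IsCoprime s t := Int.isCoprime_iff_gcd_eq_one.mpr hgcdst
  have hDst : D = s*t := by linarith
  have hst2pq : s*t = 2*(p*q) := by rw [← hDst, hD_pq]; ring
  have hs0 : 0 < s := by linarith
  have hp0 : 0 < p := by linarith
  -- bounds used for the descent
  have hpc : p < c := bound1 p q c hq0 hqp hc_pq
  have hsc : s < c := bound2 s t c hs0 ht0 hc_st
  -- parity split on s, t
  rcases Int.even_or_odd s with hsev | hsodd
  · -- Case II : s even, t odd
    have htodd : Odd t := by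
      rcases Int.even_or_odd t with h | h
      · exfalso
        obtain ⟨u, hu⟩ := hsev
        have hu2 : s = 2*u := by omega
        obtain ⟨v, hv⟩ := h
        have hv2 : t = 2*v := by omega
        obtain ⟨f, hf⟩ := hcodd
        rw [hu2, hv2, hf] at hc_st
        have h21 : (2:ℤ) ∣ 1 := ⟨2*u^2 + 2*v^2 - f, by linear_combination hc_st⟩
        norm_num at h21
      · exact h
    obtain ⟨s'', hs''⟩ := hsev
    have hs''2 : s = 2*s'' := by omega
    have hs''0 : 0 < s'' := by omega
    have hstpq : s'' * t = p * q := by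
      have h2 : 2*(s''*t) = 2*(p*q) := by rw [hs''2] at hst2pq; linear_combination hst2pq
      exact mul_left_cancel₀ two_ne_zero h2
    have hgs''t : Int.gcd s'' t = 1 := by
      have hdvd : (Int.gcd s'' t : ℤ) ∣ 1 := by
        rw [← Int.ofNat_one, ← hgcdst]
        exact Int.dvd_coe_gcd ((Int.gcd_dvd_left _ _).trans ⟨2, by rw [hs''2]; ring⟩) (Int.gcd_dvd_right _ _)
      exact_mod_cast Int.eq_one_of_dvd_one (by positivity) hdvd
    obtain ⟨A1, A2, B1, B2, hA1p, hA2p, hB1p, hB2p, hfs, hft, hfp, hfq⟩ :=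
      int_four s'' t p q hs''0 ht0 hp0 hq0 hstpq hgcdpq hgs''t
    have cpA1B2 : IsCoprime A1 B2 := cop_of_dvd hpq ⟨B1, hfp⟩ ⟨A2, by rw [hfq]; ring⟩
    have cpB1A2 : IsCoprime B1 A2 := cop_of_dvd hpq ⟨A1, by rw [hfp]; ring⟩ ⟨B2, hfq⟩
    have E0 : p^2 - q^2 = s^2 + t^2 := by rw [← hc_pq, ← hc_st]
    rw [hfp, hfq, hs''2, hfs, hft] at E0
    have keyeq : A2^2*(4*A1^2 + B2^2) = B1^2*(A1^2 - B2^2) := by linear_combination -E0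
    have hB1dvd : B1^2 ∣ 4*A1^2 + B2^2 :=
      (cpB1A2.pow : IsCoprime (B1^2) (A2^2)).dvd_of_dvd_mul_left ⟨A1^2 - B2^2, keyeq⟩
    obtain ⟨u, hu⟩ := hB1dvd
    have hu2 : A1^2 - B2^2 = A2^2 * u :=
      mul_left_cancel₀ (pow_ne_zero 2 (ne_of_gt hB1p))
        (by linear_combination -keyeq + A2^2*hu)
    have hB2odd : Odd B2 := (Int.odd_mul.mp (hft ▸ htodd)).2
    have hB1odd : Odd B1 := (Int.odd_mul.mp (hft ▸ htodd)).1
    have hupos : 0 < u := by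
      have h0 : 0 < B1^2 * u := by
        rw [← hu]
        have := pow_pos hA1p 2
        have := pow_pos hB2p 2
        linarith
      by_contra h'
      push_neg at h'
      exact absurd h0 (not_lt.mpr (mul_nonpos_of_nonneg_of_nonpos (by positivity) h'))
    have hudvd5 : u ∣ 5 := by
      have h5B2 : u ∣ 5*B2^2 := ⟨B1^2 - 4*A2^2, by linear_combination hu - 4*hu2⟩
      have huB2 : IsCoprime u B2 := by
        have h2' : IsCoprime (2:ℤ) B2 := (odd_coprime_two B2 hB2odd).symm
        have hc4 : IsCoprime (2*2*A1^2) B2 := (h2'.mul_left h2').mul_left cpA1B2.pow_left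
        have hadd : IsCoprime (2*2*A1^2 + B2*B2) B2 := hc4.add_mul_left_left B2
        have hdd : u ∣ 2*2*A1^2 + B2*B2 := ⟨B1^2, by linear_combination hu⟩
        exact hadd.of_isCoprime_of_dvd_left hdd
      exact (huB2.pow_right).dvd_of_dvd_mul_right h5B2
    have hu15 : u = 1 ∨ u = 5 := by
      have h1' : u.natAbs ∣ 5 := by
        have := Int.natAbs_dvd_natAbs.mpr hudvd5
        simpa using this
      have h5p : Nat.Prime 5 := by norm_num
      rcases h5p.eq_one_or_self_of_dvd _ h1' with h | h <;> omega
    have hB1c : B1 < c := by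
      have : B1 ≤ p := Int.le_of_dvd hp0 ⟨A1, by rw [hfp]; ring⟩
      omega
    rcases hu15 with rfl | rfl
    · -- u = 1 : impossible mod 8
      have f1 : B1^2 = 4*A1^2 + B2^2 := by linear_combination -hu
      have f2 : A1^2 = A2^2 + B2^2 := by linear_combination hu2
      obtain ⟨e, he⟩ := hB2odd
      have c1 : ((B1:ZMod 8))^2 = 4*(A1:ZMod 8)^2 + (2*(e:ZMod 8)+1)^2 := by
        have := congrArg (fun z : ℤ => (z : ZMod 8)) f1
        push_cast [he] at this ⊢
        linear_combination this
      have c2 : ((A1:ZMod 8))^2 = (A2:ZMod 8)^2 + (2*(e:ZMod 8)+1)^2 := by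
        have := congrArg (fun z : ℤ => (z : ZMod 8)) f2
        push_cast [he] at this ⊢
        linear_combination this
      exact zmod8_lemma2 _ _ _ _ c1 c2
    · -- u = 5 : descend through the original system
      have hh1 : 5*B1^2 = B2^2 + (2*A1)^2 := by linear_combination -hu
      have hh2 : 5*(2*A2)^2 = (2*A1)^2 - 4*B2^2 := by linear_combination -4*hu2
      have hgB1 : Int.gcd B1 (2*A2) = 1 :=
        Int.isCoprime_iff_gcd_eq_one.mp ((odd_coprime_two B1 hB1odd).mul_right cpB1A2)
      obtain ⟨D', B'', hD', hB'', hodd', hgcd', e1', e2'⟩ :=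
        P1_to_P2 B2 (2*A1) B1 (2*A2) hB2p (by linarith) hB1p (by linarith) hgB1 hh1 hh2
      exact IH B1.natAbs (by omega) B2 D' B1 B'' hB2p hD' hB1p hB'' hodd' hgcd' e1' e2' rfl
  · -- Case I : s odd, t even
    have hteven : Even t := by
      rcases Int.even_or_odd t with h | h
      · exact h
      · exfalso
        obtain ⟨u, hu⟩ := hsodd
        obtain ⟨v, hv⟩ := h
        obtain ⟨f, hf⟩ := hcodd
        rw [hu, hv, hf] at hc_st
        have h21 : (2:ℤ) ∣ 1 := ⟨2*u^2 + 2*u + 2*v^2 + 2*v + 1 - f, by linear_combination hc_st⟩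
        norm_num at h21
    obtain ⟨t', htt'⟩ := hteven
    have ht'2 : t = 2*t' := by omega
    have ht'0 : 0 < t' := by omega
    have hstpq : s * t' = p * q := by
      have h2 : 2*(s*t') = 2*(p*q) := by rw [ht'2] at hst2pq; linear_combination hst2pq
      exact mul_left_cancel₀ two_ne_zero h2
    have hgst' : Int.gcd s t' = 1 := by
      have hdvd : (Int.gcd s t' : ℤ) ∣ 1 := by
        rw [← Int.ofNat_one, ← hgcdst]
        exact Int.dvd_coe_gcd (Int.gcd_dvd_left _ _) ((Int.gcd_dvd_right _ _).trans ⟨2, by rw [ht'2]; ring⟩)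
      exact_mod_cast Int.eq_one_of_dvd_one (by positivity) hdvd
    obtain ⟨s1, s2, t1, t2, hs1p, hs2p, ht1p, ht2p, hfs, hft, hfp, hfq⟩ :=
      int_four s t' p q hs0 ht'0 hp0 hq0 hstpq hgcdpq hgst'
    have cps1t2 : IsCoprime s1 t2 := cop_of_dvd hpq ⟨t1, hfp⟩ ⟨s2, by rw [hfq]; ring⟩
    have cpt1s2 : IsCoprime t1 s2 := cop_of_dvd hpq ⟨s1, by rw [hfp]; ring⟩ ⟨t2, hfq⟩
    have E0 : p^2 - q^2 = s^2 + t^2 := by rw [← hc_pq, ← hc_st]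
    rw [hfp, hfq, hfs, ht'2, hft] at E0
    have keyeq : s2^2*(s1^2 + t2^2) = t1^2*(s1^2 - 4*t2^2) := by linear_combination -E0
    have ht1dvd : t1^2 ∣ s1^2 + t2^2 :=
      (cpt1s2.pow : IsCoprime (t1^2) (s2^2)).dvd_of_dvd_mul_left ⟨s1^2 - 4*t2^2, keyeq⟩
    obtain ⟨u, hu⟩ := ht1dvd
    have hu2 : s1^2 - 4*t2^2 = s2^2 * u :=
      mul_left_cancel₀ (pow_ne_zero 2 (ne_of_gt ht1p))
        (by linear_combination -keyeq + s2^2*hu)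
    have hupos : 0 < u := by
      have h0 : 0 < t1^2 * u := by
        rw [← hu]
        have := pow_pos hs1p 2
        have := pow_pos ht2p 2
        linarith
      by_contra h'
      push_neg at h'
      exact absurd h0 (not_lt.mpr (mul_nonpos_of_nonneg_of_nonpos (by positivity) h'))
    have hudvd5 : u ∣ 5 := by
      have h5t2 : u ∣ 5*t2^2 := ⟨t1^2 - s2^2, by linear_combination hu - hu2⟩
      have hut2 : IsCoprime u t2 := by
        have hadd : IsCoprime (s1^2 + t2*t2) t2 := (cps1t2.pow_left).add_mul_left_left t2
        have hdd : u ∣ s1^2 + t2*t2 := ⟨t1^2, by linear_combination hu⟩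
        exact hadd.of_isCoprime_of_dvd_left hdd
      exact (hut2.pow_right).dvd_of_dvd_mul_right h5t2
    have hu15 : u = 1 ∨ u = 5 := by
      have h1' : u.natAbs ∣ 5 := by
        have := Int.natAbs_dvd_natAbs.mpr hudvd5
        simpa using this
      have h5p : Nat.Prime 5 := by norm_num
      rcases h5p.eq_one_or_self_of_dvd _ h1' with h | h <;> omega
    have ht1c : t1 < c := by
      have : t1 ≤ p := Int.le_of_dvd hp0 ⟨s1, by rw [hfp]; ring⟩
      omega
    have hs1c : s1 < c := by
      have : s1 ≤ s := Int.le_of_dvd hs0 ⟨s2, hfs⟩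
      omega
    rcases hu15 with rfl | rfl
    · -- u = 1 : smaller solution of the same system
      have hP2a : s1^2 = s2^2 + 4*t2^2 := by linear_combination hu2
      have hP2b : t1^2 = s1^2 + t2^2 := by linear_combination -hu
      have hs1odd : Odd s1 := (Int.odd_mul.mp (hfs ▸ hsodd)).1
      exact IH s1.natAbs (by omega) s2 t2 s1 t1 hs2p ht2p hs1p ht1p hs1odd
        (Int.isCoprime_iff_gcd_eq_one.mp cps1t2) hP2a hP2b rfl
    · -- u = 5 : descend through the original system
      have hh1 : 5*t1^2 = t2^2 + s1^2 := by linear_combination -hu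
      have hh2 : 5*s2^2 = s1^2 - 4*t2^2 := by linear_combination -hu2
      obtain ⟨D', B', hD', hB', hodd', hgcd', e1', e2'⟩ :=
        P1_to_P2 t2 s1 t1 s2 ht2p hs1p ht1p hs2p
          (Int.isCoprime_iff_gcd_eq_one.mp cpt1s2) hh1 hh2
      exact IH t1.natAbs (by omega) t2 D' t1 B' ht2p hD' ht1p hB' hodd' hgcd' e1' e2' rfl

theorem stmt_13 (a b c d k : ℤ) (ha : 0 < a) (hb : 0 < b) (hc : 0 < c)
    (hd : 0 < d) (hk : 0 < k) (hcd : Int.gcd c d = 1)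
    (h1 : 5 * c ^ 2 = k * (a ^ 2 + b ^ 2))
    (h2 : 5 * d ^ 2 = k * (b ^ 2 - 4 * a ^ 2)) :
    k = 5 := by
  have hk5 : k ∣ 5 := by
    have hcd' : IsCoprime c d := Int.isCoprime_iff_gcd_eq_one.mpr hcd
    obtain ⟨α, β, hαβ⟩ := (hcd'.pow : IsCoprime (c^2) (d^2))
    have h5 : (5:ℤ) = α*(5*c^2) + β*(5*d^2) := by linear_combination -5*hαβ
    rw [h5]
    exact dvd_add (Dvd.dvd.mul_left ⟨_, h1⟩ α) (Dvd.dvd.mul_left ⟨_, h2⟩ β)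
  have hk15 : k = 1 ∨ k = 5 := by
    have h1' : k.natAbs ∣ 5 := by
      have := Int.natAbs_dvd_natAbs.mpr hk5
      simpa using this
    have h5p : Nat.Prime 5 := by norm_num
    rcases h5p.eq_one_or_self_of_dvd _ h1' with h | h <;> omega
  rcases hk15 with rfl | rfl
  · exfalso
    rw [one_mul] at h1 h2
    obtain ⟨D, B, hD, hB, hcodd, hgcd, e1, e2⟩ :=
      P1_to_P2 a b c d ha hb hc hd hcd h1 h2
    exact noP2 c.natAbs a D c B ha hD hc hB hcodd hgcd e1 e2 rfl
  · rfl
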